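/- Let γ ∈ (ℕ ∪ {−1})^N with γ ∉ C_g, so that ‖γ‖_g ≠ 0 (and ‖γ‖_g is invertible in k since char k = 0). Define h_m : K_{g,γ}^m → K_{g,γ}^{m−1} by h_m(x^α ⊗ (x*)^{∧β}) = ‖γ‖_g^{−1} Σ_{i=1}^N ω_g(α,β,i) · x^{α−[i]} ⊗ (x*)^{∧(β−[i])}, where summands with α_i = 0 or β_i = 0 vanish because then ω_g(α,β,i) = 0. Then for all α ∈ ℕ^N and β ∈ {0,1}^N with |β| = m and α − β = γ: h_{m+1}(d*_{m+1}(x^α ⊗ (x*)^{∧β})) + d*_m(h_m(x^α ⊗ (x*)^{∧β})) = x^α ⊗ (x*)^{∧β}; that is, the identity map of K_{g,γ}^• is nullhomotopic. -/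

import Mathlib

attribute [local instance] Classical.propDecidable

noncomputable section

section Scalars
variable (k : Type) [Field k] (N : ℕ) (q : Fin N → Fin N → k) (lam : Fin N → k)

/-- `ε(β,i) = (-1)^{β_1 + ⋯ + β_i}`. -/
def eps (β : Fin N → ℤ) (i : Fin N) : k :=
  (-1 : k) ^ (∑ s ∈ Finset.univ.filter (fun s => s ≤ i), β s)

/-- The scalar `Ω_g(α, β, i)` of the paper: `0` if `∏_{s=1}^N q_{i,s}^{α_s-β_s} = λ_i`,
`0` if `β_i ≠ 0`, and
`ε(β,i) (∏_{s=1}^i q_{i,s}^{α_s-β_s} - λ_i ∏_{s=i}^N q_{s,i}^{α_s-β_s})` otherwise. -/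
def Omega (α β : Fin N → ℤ) (i : Fin N) : k :=
  if (∏ s, q i s ^ (α s - β s)) = lam i then 0
  else if β i ≠ 0 then 0
  else
    eps k N β i *
      ((∏ s ∈ Finset.univ.filter (fun s => s ≤ i), q i s ^ (α s - β s))
        - lam i * (∏ s ∈ Finset.univ.filter (fun s => i ≤ s), q s i ^ (α s - β s)))

/-- The scalar `ω_g(α, β, i)` of the paper: `0` if `∏_{s=1}^N q_{i,s}^{α_s-β_s} = λ_i`,
or `α_i ≤ 0`, or `β_i ≠ 1`; and `Ω_g(α-[i], β-[i], i)⁻¹` otherwise. -/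
def omg (α β : Fin N → ℤ) (i : Fin N) : k :=
  if (∏ s, q i s ^ (α s - β s)) = lam i then 0
  else if α i ≤ 0 then 0
  else if β i ≠ 1 then 0
  else (Omega k N q lam (α - Pi.single i 1) (β - Pi.single i 1) i)⁻¹

/-- `‖γ‖_g`, the number of indices `i` with `∏_{s=1}^N q_{i,s}^{γ_s} ≠ λ_i` and
`γ_i ≠ -1`. -/
def normg (γ : Fin N → ℤ) : ℕ :=
  (Finset.univ.filter (fun i : Fin N => (∏ s, q i s ^ γ s) ≠ lam i ∧ γ i ≠ -1)).card

end Scalars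


section Homotopy
variable (k : Type) [Field k] (N : ℕ) (q : Fin N → Fin N → k) (lam : Fin N → k)

/-- The twisted complex `K^• = A ⊗ ∧^•(V^*)`, written in its `k`-basis
`x^α ⊗ (x*)^{∧β}` indexed by pairs `(α, β) ∈ ℕ^N × {0,1}^N` (with `β` a subset of
`{1,…,N}`): an element is a finitely supported `k`-valued family of coefficients. -/
abbrev CoordCochain := ((Fin N → ℕ) × Finset (Fin N)) →₀ k

/-- A subset `β ⊆ {1,…,N}`, considered as a `{0,1}`-vector in `ℤ^N`. -/
def betaZ (S : Finset (Fin N)) : Fin N → ℤ := fun s => if s ∈ S then 1 else 0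

/-- The differential of the twisted complex, in coordinates (formula (9) of the paper):
`d*(x^α ⊗ (x*)^{∧β}) = Σ_{i=1}^N Ω_g(α,β,i) x^{α+[i]} ⊗ (x*)^{∧(β+[i])}`. -/
def Dtw : CoordCochain k N →ₗ[k] CoordCochain k N :=
  Finsupp.lsum k fun p : (Fin N → ℕ) × Finset (Fin N) =>
    LinearMap.toSpanSingleton k (CoordCochain k N)
      (∑ i : Fin N,
        Omega k N q lam (fun s => (p.1 s : ℤ)) (betaZ N p.2) i •
          Finsupp.single (p.1 + Pi.single i 1, insert i p.2) (1 : k))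

/-- The contracting homotopy `h` of Lemma 4.5 of the paper (for a fixed
`γ ∈ (ℕ ∪ {-1})^N` with `γ ∉ C_g`):
`h(x^α ⊗ (x*)^{∧β}) = ‖γ‖_g⁻¹ Σ_{i=1}^N ω_g(α,β,i) x^{α-[i]} ⊗ (x*)^{∧(β-[i])}`. -/
def Htw (γ : Fin N → ℤ) : CoordCochain k N →ₗ[k] CoordCochain k N :=
  Finsupp.lsum k fun p : (Fin N → ℕ) × Finset (Fin N) =>
    LinearMap.toSpanSingleton k (CoordCochain k N)
      (((normg k N q lam γ : k))⁻¹ •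
        ∑ i : Fin N,
          omg k N q lam (fun s => (p.1 s : ℤ)) (betaZ N p.2) i •
            Finsupp.single (p.1 - Pi.single i 1, p.2.erase i) (1 : k))

/-- The set `C_g = {γ ∈ (ℕ ∪ {-1})^N : for each i, ∏_s q_{i,s}^{γ_s} = λ_i or γ_i = -1}`. -/
def Cg : Set (Fin N → ℤ) :=
  {γ | ∀ i : Fin N, (∏ s, q i s ^ γ s) = lam i ∨ γ i = -1}

end Homotopy


section AuxL
variable {k : Type} [Field k] {N : ℕ} (q : Fin N → Fin N → k) (lam : Fin N → k) (γ : Fin N → ℤ)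

lemma eps_add_single (β : Fin N → ℤ) (i j : Fin N) :
    eps k N (β + Pi.single j 1) i = (if j ≤ i then (-1:k) else 1) * eps k N β i := by
  unfold eps
  have h : ∑ s ∈ Finset.univ.filter (fun s => s ≤ i), (β + Pi.single j 1 : Fin N → ℤ) s
      = (if j ≤ i then 1 else 0) + ∑ s ∈ Finset.univ.filter (fun s => s ≤ i), β s := by
    simp only [Pi.add_apply, Finset.sum_add_distrib, Pi.single_apply]
    rw [Finset.sum_ite_eq' (Finset.univ.filter (fun s => s ≤ i)) j (fun _ => (1:ℤ))]
    simp [add_comm]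
  rw [h, zpow_add₀ (by norm_num : (-1:k) ≠ 0)]
  congr 1
  split <;> simp

lemma eps_sub_single (β : Fin N → ℤ) (i j : Fin N) :
    eps k N (β - Pi.single j 1) i = (if j ≤ i then (-1:k) else 1) * eps k N β i := by
  have := eps_add_single (k := k) (β - Pi.single j 1) i j
  simp only [sub_add_cancel] at this
  rw [this]
  split <;> [skip; simp]
  rw [← mul_assoc]; norm_num

lemma eps_ne_zero (β : Fin N → ℤ) (i : Fin N) : eps k N β i ≠ 0 :=
  zpow_ne_zero _ (by norm_num)

lemma eps_mul_self (β : Fin N → ℤ) (i : Fin N) : eps k N β i * eps k N β i = 1 := by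
  unfold eps; rw [← mul_zpow]; norm_num

def Bg (i : Fin N) : k :=
  (∏ s ∈ Finset.univ.filter (fun s => s ≤ i), q i s ^ γ s)
    - lam i * (∏ s ∈ Finset.univ.filter (fun s => i ≤ s), q s i ^ γ s)

variable (hq0 : ∀ i j, q i j ≠ 0) (hq1 : ∀ i, q i i = 1) (hqinv : ∀ i j, q j i = (q i j)⁻¹)

include hq0 hq1 hqinv in
lemma Bg_mul (i : Fin N) :
    Bg q lam γ i * (∏ s ∈ Finset.univ.filter (fun s => i ≤ s), q i s ^ γ s)
      = (∏ s, q i s ^ γ s) - lam i := by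
  have hfe : Finset.univ.filter (fun s : Fin N => i ≤ s)
      = insert i (Finset.univ.filter (fun s : Fin N => i < s)) := by
    ext s; simp [le_iff_lt_or_eq, eq_comm, or_comm]
  have hnm : i ∉ Finset.univ.filter (fun s : Fin N => i < s) := by simp
  have hE : (∏ s ∈ Finset.univ.filter (fun s => i ≤ s), q i s ^ γ s)
      = ∏ s ∈ Finset.univ.filter (fun s => i < s), q i s ^ γ s := by
    rw [hfe, Finset.prod_insert hnm, hq1 i, one_zpow, one_mul]
  have hinv : (∏ s ∈ Finset.univ.filter (fun s => i ≤ s), q s i ^ γ s)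
      = (∏ s ∈ Finset.univ.filter (fun s => i ≤ s), q i s ^ γ s)⁻¹ := by
    rw [← Finset.prod_inv_distrib]
    exact Finset.prod_congr rfl fun s _ => by rw [hqinv i s, inv_zpow]
  have hsplit : (∏ s ∈ Finset.univ.filter (fun s => s ≤ i), q i s ^ γ s)
      * (∏ s ∈ Finset.univ.filter (fun s => i < s), q i s ^ γ s) = ∏ s, q i s ^ γ s := by
    rw [← Finset.prod_filter_mul_prod_filter_not Finset.univ (fun s => s ≤ i) (fun s => q i s ^ γ s)]
    congr 1
    exact Finset.prod_congr (by ext s; simp [not_le]) fun _ _ => rfl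
  have hEne : (∏ s ∈ Finset.univ.filter (fun s => i ≤ s), q i s ^ γ s) ≠ 0 :=
    Finset.prod_ne_zero_iff.2 fun s _ => zpow_ne_zero _ (hq0 i s)
  unfold Bg
  rw [sub_mul, hinv, mul_assoc, inv_mul_cancel₀ hEne, mul_one]
  rw [hE, hsplit]

include hq0 hq1 hqinv in
lemma Bg_ne_zero {i : Fin N} (h : (∏ s, q i s ^ γ s) ≠ lam i) : Bg q lam γ i ≠ 0 := by
  intro h0
  have := Bg_mul q lam γ hq0 hq1 hqinv i
  rw [h0, zero_mul] at this
  exact h (by linear_combination -this)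

include hq0 hq1 hqinv in
lemma Bg_eq_zero {i : Fin N} (h : (∏ s, q i s ^ γ s) = lam i) : Bg q lam γ i = 0 := by
  have hm := Bg_mul q lam γ hq0 hq1 hqinv i
  rw [h, sub_self] at hm
  have hEne : (∏ s ∈ Finset.univ.filter (fun s => i ≤ s), q i s ^ γ s) ≠ 0 :=
    Finset.prod_ne_zero_iff.2 fun s _ => zpow_ne_zero _ (hq0 i s)
  exact (mul_eq_zero.1 hm).resolve_right hEne

include hq0 hq1 hqinv in
lemma Omega_eq {α β : Fin N → ℤ} {i : Fin N} (hd : ∀ s, α s - β s = γ s) (hβ : β i = 0) :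
    Omega k N q lam α β i = eps k N β i * Bg q lam γ i := by
  unfold Omega
  simp only [hd]
  split
  · rw [Bg_eq_zero q lam γ hq0 hq1 hqinv ‹_›, mul_zero]
  · rw [if_neg (by simp [hβ])]
    rfl

lemma Omega_zero_of_ne {α β : Fin N → ℤ} {i : Fin N} (hβ : β i ≠ 0) :
    Omega k N q lam α β i = 0 := by
  unfold Omega; split_ifs <;> simp_all

lemma Omega_zero_of_eq {α β : Fin N → ℤ} {i : Fin N}
    (h : (∏ s, q i s ^ (α s - β s)) = lam i) : Omega k N q lam α β i = 0 := by
  unfold Omega; rw [if_pos h]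

include hq0 hq1 hqinv in
lemma omg_eq {α β : Fin N → ℤ} {i : Fin N} (hd : ∀ s, α s - β s = γ s)
    (hP : (∏ s, q i s ^ γ s) ≠ lam i) (hα : 0 < α i) (hβ : β i = 1) :
    omg k N q lam α β i = (eps k N (β - Pi.single i 1) i * Bg q lam γ i)⁻¹ := by
  unfold omg
  simp only [hd]
  rw [if_neg hP, if_neg (not_le.2 hα), if_neg (by simp [hβ])]
  congr 1
  refine Omega_eq q lam γ hq0 hq1 hqinv (fun s => ?_) (by simp [hβ])
  simp only [Pi.sub_apply]
  linarith [hd s]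

lemma omg_zero_of_eq {α β : Fin N → ℤ} {i : Fin N}
    (h : (∏ s, q i s ^ (α s - β s)) = lam i) : omg k N q lam α β i = 0 := by
  unfold omg; rw [if_pos h]

lemma omg_zero_of_nonpos {α β : Fin N → ℤ} {i : Fin N} (hα : α i ≤ 0) :
    omg k N q lam α β i = 0 := by
  unfold omg; split_ifs <;> simp_all

lemma omg_zero_of_ne_one {α β : Fin N → ℤ} {i : Fin N} (hβ : β i ≠ 1) :
    omg k N q lam α β i = 0 := by
  unfold omg; split_ifs <;> simp_all

lemma betaZ_insert {S : Finset (Fin N)} {i : Fin N} (h : i ∉ S) :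
    betaZ N (insert i S) = betaZ N S + Pi.single i 1 := by
  funext s
  by_cases hs : s = i
  · subst hs; simp [betaZ, h]
  · simp [betaZ, Pi.single_apply, hs, Finset.mem_insert]

lemma betaZ_erase {S : Finset (Fin N)} {j : Fin N} (h : j ∈ S) :
    betaZ N (S.erase j) = betaZ N S - Pi.single j 1 := by
  funext s
  by_cases hs : s = j
  · subst hs; simp [betaZ, h]
  · simp [betaZ, Pi.single_apply, hs, Finset.mem_erase]

lemma cast_add_single (α : Fin N → ℕ) (i : Fin N) :
    (fun s => (((α + Pi.single i 1 : Fin N → ℕ)) s : ℤ)) = (fun s => (α s : ℤ)) + Pi.single i 1 := by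
  funext s
  by_cases hs : s = i
  · subst hs; simp
  · simp [Pi.single_apply, hs]

lemma cast_sub_single {α : Fin N → ℕ} {j : Fin N} (h : 0 < α j) :
    (fun s => (((α - Pi.single j 1 : Fin N → ℕ)) s : ℤ)) = (fun s => (α s : ℤ)) - Pi.single j 1 := by
  funext s
  by_cases hs : s = j
  · subst hs
    simp only [Pi.sub_apply, Pi.single_eq_same]
    rw [Nat.cast_sub h]
    simp
  · simp [Pi.single_apply, hs]
end AuxL

section Aux2
variable (k : Type) [Field k] (N : ℕ) (q : Fin N → Fin N → k) (lam : Fin N → k) (γ : Fin N → ℤ)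

lemma Dtw_single (p : (Fin N → ℕ) × Finset (Fin N)) :
    Dtw k N q lam (Finsupp.single p 1) =
      ∑ i : Fin N,
        Omega k N q lam (fun s => (p.1 s : ℤ)) (betaZ N p.2) i •
          Finsupp.single (p.1 + Pi.single i 1, insert i p.2) (1 : k) := by
  simp [Dtw, Finsupp.lsum_single, LinearMap.toSpanSingleton_apply]

lemma Htw_single (p : (Fin N → ℕ) × Finset (Fin N)) :
    Htw k N q lam γ (Finsupp.single p 1) =
      ((normg k N q lam γ : k))⁻¹ •
        ∑ i : Fin N,
          omg k N q lam (fun s => (p.1 s : ℤ)) (betaZ N p.2) i •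
            Finsupp.single (p.1 - Pi.single i 1, p.2.erase i) (1 : k) := by
  simp [Htw, Finsupp.lsum_single, LinearMap.toSpanSingleton_apply]
end Aux2

/-- Lemma 4.5 of the paper: for `γ ∈ (ℕ ∪ {-1})^N` with `γ ∉ C_g` one has
`‖γ‖_g ≠ 0` (and `‖γ‖_g` is invertible in `k` since `char k = 0`), and the maps
`h_m(x^α ⊗ (x*)^{∧β}) = ‖γ‖_g⁻¹ Σ_i ω_g(α,β,i) x^{α-[i]} ⊗ (x*)^{∧(β-[i])}` satisfy
`h_{m+1}(d*(x^α ⊗ (x*)^{∧β})) + d*(h_m(x^α ⊗ (x*)^{∧β})) = x^α ⊗ (x*)^{∧β}` for all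
`α ∈ ℕ^N`, `β ∈ {0,1}^N` with `|β| = m` and `α - β = γ`; that is, the identity map of
`K_{g,γ}^•` is nullhomotopic. -/
theorem stmt11 (k : Type) [Field k] [CharZero k] (N : ℕ) (hN : 0 < N)
    (q : Fin N → Fin N → k) (hq0 : ∀ i j, q i j ≠ 0) (hq1 : ∀ i, q i i = 1)
    (hqinv : ∀ i j, q j i = (q i j)⁻¹)
    (lam : Fin N → k) (hlam : ∀ i, lam i ≠ 0)
    (γ : Fin N → ℤ) (hγ : ∀ i, -1 ≤ γ i) (hγC : γ ∉ Cg k N q lam) :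
    normg k N q lam γ ≠ 0 ∧
    ((normg k N q lam γ : k) ≠ 0) ∧
    ∀ (m : ℕ) (α : Fin N → ℕ) (S : Finset (Fin N)), S.card = m →
      (fun s => (α s : ℤ)) - betaZ N S = γ →
      Htw k N q lam γ (Dtw k N q lam (Finsupp.single (α, S) (1 : k)))
        + Dtw k N q lam (Htw k N q lam γ (Finsupp.single (α, S) (1 : k)))
        = Finsupp.single (α, S) (1 : k) := by
  have hex : ∃ i, (∏ s, q i s ^ γ s) ≠ lam i ∧ γ i ≠ -1 := by
    by_contra h
    push_neg at h
    exact hγC (fun i => by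
      by_cases hp : (∏ s, q i s ^ γ s) = lam i
      · exact Or.inl hp
      · exact Or.inr (h i hp))
  have h1 : normg k N q lam γ ≠ 0 := by
    obtain ⟨i, hi⟩ := hex
    have : i ∈ Finset.univ.filter (fun i : Fin N => (∏ s, q i s ^ γ s) ≠ lam i ∧ γ i ≠ -1) := by
      simp [hi.1, hi.2]
    unfold normg
    exact Finset.card_ne_zero_of_mem this
  have h2 : ((normg k N q lam γ : k)) ≠ 0 := Nat.cast_ne_zero.2 h1
  refine ⟨h1, h2, ?_⟩
  intro m α S hcard hdiff
  have hd : ∀ s, (α s : ℤ) - betaZ N S s = γ s := fun s => congrFun hdiff s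
  set c : k := ((normg k N q lam γ : k)) with hc
  -- pointwise difference facts
  have hbS : ∀ t : Fin N, betaZ N S t = if t ∈ S then 1 else 0 := fun t => rfl
  -- main rewrite of both compositions into double sums
  rw [Dtw_single, map_sum, Htw_single, map_smul, map_sum]
  simp only [map_smul, Htw_single, Dtw_single]
  simp only [Finset.smul_sum, smul_smul]
  -- the diagonal scalar
  have hsum_dg : ∑ i : Fin N,
      (c⁻¹ * (if (∏ s, q i s ^ γ s) ≠ lam i ∧ γ i ≠ -1 then (1:k) else 0)) •
        Finsupp.single (α, S) (1 : k) = Finsupp.single (α, S) (1 : k) := by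
    rw [← Finset.sum_smul, ← Finset.mul_sum, Finset.sum_boole]
    have : (Finset.univ.filter fun i : Fin N => (∏ s, q i s ^ γ s) ≠ lam i ∧ γ i ≠ -1).card
        = normg k N q lam γ := by
      unfold normg; congr 1
    rw [this, ← hc, inv_mul_cancel₀ h2, one_smul]
  conv_rhs => rw [← hsum_dg]
  nth_rewrite 2 [Finset.sum_comm]
  rw [← Finset.sum_add_distrib]
  refine Finset.sum_congr rfl fun i _ => ?_
  rw [← Finset.sum_add_distrib]
  -- off-diagonal vanishing
  have hoff : ∀ j : Fin N, j ≠ i →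
      (Omega k N q lam (fun s => (α s : ℤ)) (betaZ N S) i *
          (c⁻¹ * omg k N q lam (fun s => ((α + Pi.single i 1 : Fin N → ℕ) s : ℤ))
            (betaZ N (insert i S)) j)) •
        Finsupp.single (α + Pi.single i 1 - Pi.single j 1, (insert i S).erase j) (1:k) +
      (c⁻¹ * (omg k N q lam (fun s => (α s : ℤ)) (betaZ N S) j *
          Omega k N q lam (fun s => ((α - Pi.single j 1 : Fin N → ℕ) s : ℤ))
            (betaZ N (S.erase j)) i)) •
        Finsupp.single (α - Pi.single j 1 + Pi.single i 1, insert i (S.erase j)) (1:k) = 0 := by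
    intro j hji
    by_cases hiS : i ∈ S
    · have hO1 : Omega k N q lam (fun s => (α s : ℤ)) (betaZ N S) i = 0 :=
        Omega_zero_of_ne q lam (by simp [betaZ, hiS])
      have hO2 : Omega k N q lam (fun s => ((α - Pi.single j 1 : Fin N → ℕ) s : ℤ))
          (betaZ N (S.erase j)) i = 0 :=
        Omega_zero_of_ne q lam (by simp [betaZ, Finset.mem_erase, hiS, Ne.symm hji])
      rw [hO1, hO2]; simp
    by_cases hjS : j ∈ S
    swap
    · have hw1 : omg k N q lam (fun s => ((α + Pi.single i 1 : Fin N → ℕ) s : ℤ))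
          (betaZ N (insert i S)) j = 0 :=
        omg_zero_of_ne_one q lam (by simp [betaZ, Finset.mem_insert, hji, hjS])
      have hw2 : omg k N q lam (fun s => (α s : ℤ)) (betaZ N S) j = 0 :=
        omg_zero_of_ne_one q lam (by simp [betaZ, hjS])
      rw [hw1, hw2]; simp
    by_cases hαj : α j = 0
    · have hv1 : ((α + Pi.single i 1 : Fin N → ℕ) j : ℤ) ≤ 0 := by
        simp [Pi.single_apply, hji, hαj]
      have hw1 : omg k N q lam (fun s => ((α + Pi.single i 1 : Fin N → ℕ) s : ℤ))
          (betaZ N (insert i S)) j = 0 := omg_zero_of_nonpos q lam hv1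
      have hw2 : omg k N q lam (fun s => (α s : ℤ)) (betaZ N S) j = 0 :=
        omg_zero_of_nonpos q lam (by simp [hαj])
      rw [hw1, hw2]; simp
    have hαj' : 0 < α j := Nat.pos_of_ne_zero hαj
    have hd1 : ∀ s, ((α + Pi.single i 1 : Fin N → ℕ) s : ℤ) - betaZ N (insert i S) s = γ s := by
      intro s
      have h1 := congrFun (cast_add_single (N := N) α i) s
      have h2 := congrFun (betaZ_insert (N := N) hiS) s
      simp only [Pi.add_apply] at h1 h2
      rw [Pi.add_apply, h1, h2]
      have := hd s; ring_nf; ring_nf at this; linarith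
    have hd2 : ∀ s, ((α - Pi.single j 1 : Fin N → ℕ) s : ℤ) - betaZ N (S.erase j) s = γ s := by
      intro s
      have h1 := congrFun (cast_sub_single (N := N) hαj') s
      have h2 := congrFun (betaZ_erase (N := N) hjS) s
      simp only [Pi.sub_apply] at h1 h2
      rw [Pi.sub_apply, h1, h2]
      have := hd s; ring_nf; ring_nf at this; linarith
    by_cases hPi : (∏ s, q i s ^ γ s) = lam i
    · have hO1 : Omega k N q lam (fun s => (α s : ℤ)) (betaZ N S) i = 0 := by
        refine Omega_zero_of_eq q lam ?_
        rw [Finset.prod_congr rfl fun s _ => by rw [hd s]]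
        exact hPi
      have hO2 : Omega k N q lam (fun s => ((α - Pi.single j 1 : Fin N → ℕ) s : ℤ))
          (betaZ N (S.erase j)) i = 0 := by
        refine Omega_zero_of_eq q lam ?_
        rw [Finset.prod_congr rfl fun s _ => by rw [hd2 s]]
        exact hPi
      rw [hO1, hO2]; simp
    by_cases hPj : (∏ s, q j s ^ γ s) = lam j
    · have hw1 : omg k N q lam (fun s => ((α + Pi.single i 1 : Fin N → ℕ) s : ℤ))
          (betaZ N (insert i S)) j = 0 := by
        refine omg_zero_of_eq q lam ?_
        rw [Finset.prod_congr rfl fun s _ => by rw [hd1 s]]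
        exact hPj
      have hw2 : omg k N q lam (fun s => (α s : ℤ)) (betaZ N S) j = 0 := by
        refine omg_zero_of_eq q lam ?_
        rw [Finset.prod_congr rfl fun s _ => by rw [hd s]]
        exact hPj
      rw [hw1, hw2]; simp
    -- main cancellation
    have hβi0 : betaZ N S i = 0 := by simp [betaZ, hiS]
    have hβj1 : betaZ N S j = 1 := by simp [betaZ, hjS]
    have hβins : betaZ N (insert i S) j = 1 := by simp [betaZ, Finset.mem_insert, hjS]
    have hposj : (0:ℤ) < (fun s => ((α + Pi.single i 1 : Fin N → ℕ) s : ℤ)) j := by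
      have : (α + Pi.single i 1 : Fin N → ℕ) j = α j := by simp [Pi.single_apply, hji]
      simp only [this]
      exact_mod_cast hαj'
    have hposj' : (0:ℤ) < (fun s => (α s : ℤ)) j := by
      show (0:ℤ) < (α j : ℤ); exact_mod_cast hαj'
    rw [Omega_eq q lam γ hq0 hq1 hqinv hd hβi0,
        omg_eq q lam γ hq0 hq1 hqinv hd1 hPj hposj hβins,
        omg_eq q lam γ hq0 hq1 hqinv hd hPj hposj' hβj1,
        Omega_eq q lam γ hq0 hq1 hqinv hd2 (by simp [betaZ, Finset.mem_erase, Ne.symm hji, hiS])]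
    have hidx1 : (α + Pi.single i 1 - Pi.single j 1 : Fin N → ℕ)
        = α - Pi.single j 1 + Pi.single i 1 := by
      funext s
      simp only [Pi.add_apply, Pi.sub_apply, Pi.single_apply]
      rcases eq_or_ne s j with rfl | hsj
      · rw [if_neg hji, if_pos rfl]; omega
      · rw [if_neg hsj]
        rcases eq_or_ne s i with rfl | hsi
        · rw [if_pos rfl]; omega
        · rw [if_neg hsi]; omega
    have hidx2 : (insert i S).erase j = insert i (S.erase j) := by
      ext s
      simp only [Finset.mem_erase, Finset.mem_insert]
      constructor
      · rintro ⟨h1, h2 | h2⟩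
        · exact Or.inl h2
        · exact Or.inr ⟨h1, h2⟩
      · rintro (rfl | ⟨h1, h2⟩)
        · exact ⟨Ne.symm hji, Or.inl rfl⟩
        · exact ⟨h1, Or.inr h2⟩
    rw [hidx1, hidx2, ← add_smul]
    rw [betaZ_insert (N := N) hiS, betaZ_erase (N := N) hjS]
    simp only [eps_sub_single, eps_add_single]
    have hu : Bg q lam γ i ≠ 0 := Bg_ne_zero q lam γ hq0 hq1 hqinv hPi
    have hv : Bg q lam γ j ≠ 0 := Bg_ne_zero q lam γ hq0 hq1 hqinv hPj
    have ha : eps k N (betaZ N S) i ≠ 0 := eps_ne_zero _ _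
    have hb : eps k N (betaZ N S) j ≠ 0 := eps_ne_zero _ _
    rcases lt_or_gt_of_ne hji with hlt | hlt
    · simp only [if_neg (not_le.2 hlt), if_pos (le_refl j), if_pos hlt.le, if_pos (le_refl i)]
      refine smul_eq_zero_of_left ?_ _
      field_simp
      ring
    · simp only [if_pos hlt.le, if_neg (not_le.2 hlt), if_pos (le_refl j), if_pos (le_refl i)]
      refine smul_eq_zero_of_left ?_ _
      field_simp
      ring
  rw [Finset.sum_eq_single_of_mem i (Finset.mem_univ i) (fun j _ hj => hoff j hj)]
  have hγi := hd i
  by_cases hiS : i ∈ S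
  · -- i ∈ S : first term vanishes
    have hO1 : Omega k N q lam (fun s => (α s : ℤ)) (betaZ N S) i = 0 :=
      Omega_zero_of_ne q lam (by simp [betaZ, hiS])
    rw [hO1, zero_mul, zero_smul, zero_add]
    have hβi1 : betaZ N S i = 1 := by simp [betaZ, hiS]
    rw [hβi1] at hγi
    by_cases hαi : α i = 0
    · have hw : omg k N q lam (fun s => (α s : ℤ)) (betaZ N S) i = 0 :=
        omg_zero_of_nonpos q lam (by show ((α i : ℤ)) ≤ 0; simp [hαi])
      have hγ1 : γ i = -1 := by rw [← hγi, hαi]; norm_num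
      rw [hw, zero_mul, mul_zero, zero_smul, if_neg (by simp [hγ1]), mul_zero, zero_smul]
    by_cases hPi : (∏ s, q i s ^ γ s) = lam i
    · have hw : omg k N q lam (fun s => (α s : ℤ)) (betaZ N S) i = 0 := by
        refine omg_zero_of_eq q lam ?_
        rw [Finset.prod_congr rfl fun s _ => by rw [hd s]]
        exact hPi
      rw [hw, zero_mul, mul_zero, zero_smul, if_neg (by simp [hPi]), mul_zero, zero_smul]
    · have hαi' : 0 < α i := Nat.pos_of_ne_zero hαi
      have hidx : (α - Pi.single i 1 + Pi.single i 1 : Fin N → ℕ) = α := by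
        funext s
        simp only [Pi.add_apply, Pi.sub_apply, Pi.single_apply]
        rcases eq_or_ne s i with rfl | hsi
        · rw [if_pos rfl]; omega
        · rw [if_neg hsi]; omega
      have hd2' : ∀ s, ((α - Pi.single i 1 : Fin N → ℕ) s : ℤ) - betaZ N (S.erase i) s = γ s := by
        intro s
        have h1 := congrFun (cast_sub_single (N := N) hαi') s
        have h2 := congrFun (betaZ_erase (N := N) hiS) s
        simp only [Pi.sub_apply] at h1 h2
        rw [Pi.sub_apply, h1, h2]
        have := hd s; linarith
      rw [hidx, Finset.insert_erase hiS]
      rw [omg_eq q lam γ hq0 hq1 hqinv hd hPi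
          (by show (0:ℤ) < (α i : ℤ); exact_mod_cast hαi') hβi1,
        Omega_eq q lam γ hq0 hq1 hqinv hd2'
          (by simp [betaZ, Finset.mem_erase]),
        betaZ_erase (N := N) hiS]
      rw [inv_mul_cancel₀
        (mul_ne_zero (eps_ne_zero _ _) (Bg_ne_zero q lam γ hq0 hq1 hqinv hPi))]
      rw [if_pos ⟨hPi, by omega⟩]
  · -- i ∉ S : second term vanishes
    have hw2 : omg k N q lam (fun s => (α s : ℤ)) (betaZ N S) i = 0 :=
      omg_zero_of_ne_one q lam (by simp [betaZ, hiS])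
    rw [hw2, zero_mul, mul_zero, zero_smul, add_zero]
    have hβi0 : betaZ N S i = 0 := by simp [betaZ, hiS]
    rw [hβi0] at hγi
    by_cases hPi : (∏ s, q i s ^ γ s) = lam i
    · have hO1 : Omega k N q lam (fun s => (α s : ℤ)) (betaZ N S) i = 0 := by
        refine Omega_zero_of_eq q lam ?_
        rw [Finset.prod_congr rfl fun s _ => by rw [hd s]]
        exact hPi
      rw [hO1, zero_mul, zero_smul, if_neg (by simp [hPi]), mul_zero, zero_smul]
    · have hidx : (α + Pi.single i 1 - Pi.single i 1 : Fin N → ℕ) = α := by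
        funext s
        simp only [Pi.add_apply, Pi.sub_apply, Pi.single_apply]
        omega
      have hd1' : ∀ s, ((α + Pi.single i 1 : Fin N → ℕ) s : ℤ) - betaZ N (insert i S) s = γ s := by
        intro s
        have h1 := congrFun (cast_add_single (N := N) α i) s
        have h2 := congrFun (betaZ_insert (N := N) hiS) s
        simp only [Pi.add_apply] at h1 h2
        rw [Pi.add_apply, h1, h2]
        have := hd s; linarith
      rw [hidx, Finset.erase_insert hiS]
      rw [Omega_eq q lam γ hq0 hq1 hqinv hd hβi0,
        omg_eq q lam γ hq0 hq1 hqinv hd1' hPi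
          (by show (0:ℤ) < (((α + Pi.single i 1 : Fin N → ℕ) i : ℕ) : ℤ)
              have : (α + Pi.single i 1 : Fin N → ℕ) i = α i + 1 := by simp
              rw [this]; positivity)
          (by simp [betaZ, Finset.mem_insert]),
        betaZ_insert (N := N) hiS, add_sub_cancel_right]
      rw [if_pos ⟨hPi, by omega⟩]
      have hne : eps k N (betaZ N S) i * Bg q lam γ i ≠ 0 :=
        mul_ne_zero (eps_ne_zero _ _) (Bg_ne_zero q lam γ hq0 hq1 hqinv hPi)
      rw [show eps k N (betaZ N S) i * Bg q lam γ i *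
          (c⁻¹ * (eps k N (betaZ N S) i * Bg q lam γ i)⁻¹) = c⁻¹ * 1 by
        rw [mul_left_comm, mul_inv_cancel₀ hne]]
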